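/- Let φ be mixing with respect to a finite invariant measure μ, let {C_i} be a finite measurable partition with μ[C_i] > 0 for all i, and let P ≪ μ with P[C_i] > 0. Then the two-step conditional transition probabilities T_{i,k,j}^{(n,n+m)} := P[φ^{-(n+m)}(C_j) | φ^{-n}(C_k) ∩ C_i] converge as n → ∞ to P_*[φ^{-m}(C_j) | C_k], a limit independent of the initial cell index i. -/

import Mathlib

open MeasureTheory Filter Set Topology

private lemma setIntegral_sub_abs_le {X : Type*} [MeasurableSpace X] {μ : Measure X}
    {f g : X → ℝ} (hf : Integrable f μ) (hg : Integrable g μ) (S : Set X) :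
    |(∫ x in S, f x ∂μ) - ∫ x in S, g x ∂μ| ≤ ∫ x, |f x - g x| ∂μ := by
  rw [← integral_sub hf.integrableOn hg.integrableOn]
  calc |∫ x in S, (f x - g x) ∂μ| ≤ ∫ x in S, |f x - g x| ∂μ := by
        simpa using norm_integral_le_integral_norm (μ := μ.restrict S) (f := fun x => f x - g x)
    _ ≤ ∫ x, |f x - g x| ∂μ :=
        setIntegral_le_integral (hf.sub hg).abs (Eventually.of_forall fun x => abs_nonneg _)

set_option synthInstance.maxHeartbeats 400000 in
private lemma weak_conv {X : Type*} [MeasurableSpace X] {μ : Measure X} [IsFiniteMeasure μ]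
    (T : ℕ → Set X) (hT : ∀ n, MeasurableSet (T n)) (c : ℝ)
    (hind : ∀ B : Set X, MeasurableSet B →
      Tendsto (fun n => (μ (T n ∩ B)).toReal) atTop (𝓝 (c * (μ B).toReal))) :
    ∀ ⦃g : X → ℝ⦄, Integrable g μ →
      Tendsto (fun n => ∫ x in T n, g x ∂μ) atTop (𝓝 (c * ∫ x, g x ∂μ)) := by
  apply Integrable.induction
  · -- indicator
    intro e s hs _
    have h1 : ∀ n, ∫ x in T n, s.indicator (fun _ => e) x ∂μ = (μ (T n ∩ s)).toReal * e := by
      intro n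
      rw [setIntegral_indicator hs, setIntegral_const, inter_comm, smul_eq_mul, measureReal_def]
    have h2 : (∫ x, s.indicator (fun _ => e) x ∂μ) = (μ s).toReal * e := by
      rw [integral_indicator_const _ hs, smul_eq_mul, measureReal_def]
    simp only [h1, h2, ← mul_assoc]
    exact ((hind s hs).mul_const e)
  · -- add
    intro f g _ hf hg hfT hgT
    have h1 : ∀ n, ∫ x in T n, (f + g) x ∂μ = (∫ x in T n, f x ∂μ) + ∫ x in T n, g x ∂μ := by
      intro n
      simp only [Pi.add_apply]
      exact integral_add hf.integrableOn hg.integrableOn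
    have h2 : (∫ x, (f + g) x ∂μ) = (∫ x, f x ∂μ) + ∫ x, g x ∂μ := by
      simp only [Pi.add_apply]; exact integral_add hf hg
    simp only [h1, h2, mul_add]
    exact hfT.add hgT
  · -- closed
    apply IsSeqClosed.isClosed
    intro F f hF hFf
    simp only [Set.mem_setOf_eq] at hF ⊢
    rw [Metric.tendsto_atTop]
    intro ε hε
    have hc : (0:ℝ) < 1 + |c| := by positivity
    obtain ⟨K, hK⟩ := (Metric.tendsto_atTop.1 hFf) (ε / (2 * (1 + |c|))) (by positivity)
    have hdist : ‖F K - f‖ < ε / (2 * (1 + |c|)) := by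
      simpa [dist_eq_norm] using hK K le_rfl
    have hnorm : (∫ x, |F K x - f x| ∂μ) ≤ ε / (2 * (1 + |c|)) := by
      have : ‖F K - f‖ = ∫ x, |(F K) x - f x| ∂μ := by
        rw [L1.norm_eq_integral_norm]
        refine integral_congr_ae ?_
        filter_upwards [Lp.coeFn_sub (F K) f] with x hx
        rw [hx]; simp [Pi.sub_apply]
      linarith [this ▸ hdist.le]
    obtain ⟨N, hN⟩ := (Metric.tendsto_atTop.1 (hF K)) (ε / 2) (by positivity)
    refine ⟨N, fun n hn => ?_⟩
    have hfi : Integrable (⇑f) μ := L1.integrable_coeFn f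
    have hFi : Integrable (⇑(F K)) μ := L1.integrable_coeFn (F K)
    have e1 : |(∫ x in T n, f x ∂μ) - ∫ x in T n, (F K) x ∂μ| ≤ ∫ x, |(F K) x - f x| ∂μ := by
      have := setIntegral_sub_abs_le hfi hFi (T n)
      calc |(∫ x in T n, f x ∂μ) - ∫ x in T n, (F K) x ∂μ| ≤ ∫ x, |f x - (F K) x| ∂μ := this
        _ = ∫ x, |(F K) x - f x| ∂μ := by simp only [abs_sub_comm]
    have e2 : |(∫ x, (F K) x ∂μ) - ∫ x, f x ∂μ| ≤ ∫ x, |(F K) x - f x| ∂μ := by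
      simpa using setIntegral_sub_abs_le hFi hfi Set.univ
    have e3 : |(∫ x in T n, (F K) x ∂μ) - c * ∫ x, (F K) x ∂μ| < ε / 2 := by
      simpa [Real.dist_eq] using hN n hn
    have habs : |c| * |(∫ x, (F K) x ∂μ) - ∫ x, f x ∂μ| ≤ |c| * ∫ x, |(F K) x - f x| ∂μ :=
      mul_le_mul_of_nonneg_left e2 (abs_nonneg c)
    rw [Real.dist_eq]
    have key : |(∫ x in T n, f x ∂μ) - c * ∫ x, f x ∂μ| ≤
        |(∫ x in T n, f x ∂μ) - ∫ x in T n, (F K) x ∂μ|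
        + |(∫ x in T n, (F K) x ∂μ) - c * ∫ x, (F K) x ∂μ|
        + |c| * |(∫ x, (F K) x ∂μ) - ∫ x, f x ∂μ| := by
      have : (∫ x in T n, f x ∂μ) - c * ∫ x, f x ∂μ =
          ((∫ x in T n, f x ∂μ) - ∫ x in T n, (F K) x ∂μ)
          + ((∫ x in T n, (F K) x ∂μ) - c * ∫ x, (F K) x ∂μ)
          + c * ((∫ x, (F K) x ∂μ) - ∫ x, f x ∂μ) := by ring
      rw [this]
      calc _ ≤ |((∫ x in T n, f x ∂μ) - ∫ x in T n, (F K) x ∂μ)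
          + ((∫ x in T n, (F K) x ∂μ) - c * ∫ x, (F K) x ∂μ)|
          + |c * ((∫ x, (F K) x ∂μ) - ∫ x, f x ∂μ)| := abs_add_le _ _
        _ ≤ _ := by rw [abs_mul]; exact add_le_add (abs_add_le _ _) le_rfl
    have hI : (0:ℝ) ≤ ∫ x, |(F K) x - f x| ∂μ :=
      integral_nonneg fun x => abs_nonneg _
    have step : (1 + |c|) * (∫ x, |(F K) x - f x| ∂μ) ≤ ε / 2 := by
      calc (1 + |c|) * (∫ x, |(F K) x - f x| ∂μ) ≤ (1 + |c|) * (ε / (2 * (1 + |c|))) :=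
            mul_le_mul_of_nonneg_left hnorm hc.le
        _ = ε / 2 := by field_simp
    nlinarith [e1, e3, habs, key, hI, abs_nonneg c]
  · -- ae
    intro f g hfg hf hP
    have h1 : ∀ n, ∫ x in T n, g x ∂μ = ∫ x in T n, f x ∂μ := fun n =>
      integral_congr_ae (ae_restrict_of_ae hfg.symm)
    have h2 : (∫ x, g x ∂μ) = ∫ x, f x ∂μ := integral_congr_ae hfg.symm
    simp only [h1, h2]
    exact hP

private lemma meas_conv {X : Type*} [MeasurableSpace X] {μ : Measure X} [IsFiniteMeasure μ]
    (Q : Measure X) [IsFiniteMeasure Q] (hQ : Q ≪ μ)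
    (T : ℕ → Set X) (hT : ∀ n, MeasurableSet (T n)) (c : ℝ)
    (hind : ∀ B : Set X, MeasurableSet B →
      Tendsto (fun n => (μ (T n ∩ B)).toReal) atTop (𝓝 (c * (μ B).toReal))) :
    Tendsto (fun n => (Q (T n)).toReal) atTop (𝓝 (c * (Q Set.univ).toReal)) := by
  have hg : Integrable (fun x => (Q.rnDeriv μ x).toReal) μ :=
    Measure.integrable_toReal_rnDeriv
  have h := weak_conv T hT c hind hg
  have e1 : ∀ n, ∫ x in T n, (Q.rnDeriv μ x).toReal ∂μ = (Q (T n)).toReal := fun n =>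
    Measure.setIntegral_toReal_rnDeriv hQ (T n)
  have e2 : (∫ x, (Q.rnDeriv μ x).toReal ∂μ) = (Q Set.univ).toReal := by
    rw [← setIntegral_univ]
    exact Measure.setIntegral_toReal_rnDeriv hQ Set.univ
  simp only [e1, e2] at h
  exact h


/-- For a mixing map, the two-step conditional transition probabilities
T_{i,k,j}^{(n,n+m)} = P[φ^{-(n+m)}(C_j) | φ^{-n}(C_k) ∩ C_i] converge as n → ∞ to
P_*[φ^{-m}(C_j) | C_k], independent of i. -/
theorem mixing_two_step_transition_limit
    {X : Type*} [MeasurableSpace X] {I : Type*} [Fintype I]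
    (μ P : Measure X) [IsFiniteMeasure μ] [IsProbabilityMeasure P]
    (φ : X → X) (hφ : MeasurePreserving φ μ μ) (hac : P ≪ μ)
    (hmix : ∀ A B : Set X, MeasurableSet A → MeasurableSet B →
      Tendsto (fun n => (μ (φ^[n] ⁻¹' A ∩ B)).toReal) atTop
        (𝓝 ((μ A).toReal / (μ Set.univ).toReal * (μ B).toReal)))
    (C : I → Set X) (hmeas : ∀ i, MeasurableSet (C i))
    (hdisj : Pairwise (Function.onFun Disjoint C)) (hcover : ⋃ i, C i = Set.univ)
    (hpos : ∀ i, 0 < μ (C i))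
    (i k j : I) (hPi : 0 < P (C i)) (m : ℕ) :
    Tendsto (fun n =>
        (P (φ^[n + m] ⁻¹' (C j) ∩ (φ^[n] ⁻¹' (C k) ∩ C i))).toReal /
          (P (φ^[n] ⁻¹' (C k) ∩ C i)).toReal) atTop
      (𝓝 ((μ (φ^[m] ⁻¹' (C j) ∩ C k)).toReal / (μ (C k)).toReal)) := by
  have hφm : ∀ n : ℕ, Measurable (φ^[n]) := fun n => hφ.measurable.iterate n
  set Q : Measure X := P.restrict (C i) with hQdef
  have hQ : Q ≪ μ := (Measure.restrict_le_self.absolutelyContinuous).trans hac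
  have hQuniv : Q Set.univ = P (C i) := by
    rw [hQdef, Measure.restrict_apply MeasurableSet.univ, Set.univ_inter]
  -- two target sets
  set A₁ : Set X := φ^[m] ⁻¹' (C j) ∩ C k with hA₁def
  have hA₁ : MeasurableSet A₁ := ((hmeas j).preimage (hφm m)).inter (hmeas k)
  have hA₂ : MeasurableSet (C k) := hmeas k
  have hpre : ∀ n, φ^[n] ⁻¹' A₁ = φ^[n + m] ⁻¹' (C j) ∩ φ^[n] ⁻¹' (C k) := by
    intro n
    rw [hA₁def, Set.preimage_inter]
    congr 1
    rw [add_comm, Function.iterate_add, Set.preimage_comp]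
  -- limits via meas_conv
  have hnum : Tendsto (fun n => (Q (φ^[n] ⁻¹' A₁)).toReal) atTop
      (𝓝 ((μ A₁).toReal / (μ Set.univ).toReal * (Q Set.univ).toReal)) := by
    refine meas_conv Q hQ (fun n => φ^[n] ⁻¹' A₁) (fun n => hA₁.preimage (hφm n)) _ ?_
    intro B hB
    simpa [div_mul_eq_mul_div, mul_div_assoc] using hmix A₁ B hA₁ hB
  have hden : Tendsto (fun n => (Q (φ^[n] ⁻¹' (C k))).toReal) atTop
      (𝓝 ((μ (C k)).toReal / (μ Set.univ).toReal * (Q Set.univ).toReal)) := by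
    refine meas_conv Q hQ (fun n => φ^[n] ⁻¹' (C k)) (fun n => hA₂.preimage (hφm n)) _ ?_
    intro B hB
    simpa [div_mul_eq_mul_div, mul_div_assoc] using hmix (C k) B hA₂ hB
  -- positivity facts
  have hμuniv : 0 < (μ Set.univ).toReal :=
    ENNReal.toReal_pos (by
      intro h
      exact absurd (measure_mono_null (Set.subset_univ (C k)) h) (hpos k).ne')
      (measure_ne_top μ _)
  have hμk : 0 < (μ (C k)).toReal := ENNReal.toReal_pos (hpos k).ne' (measure_ne_top μ _)
  have hPCi : 0 < (P (C i)).toReal := ENNReal.toReal_pos hPi.ne' (measure_ne_top P _)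
  have hden_ne : (μ (C k)).toReal / (μ Set.univ).toReal * (Q Set.univ).toReal ≠ 0 := by
    rw [hQuniv]; positivity
  have hlim := hnum.div hden hden_ne
  have heqfun : ∀ n, (Q (φ^[n] ⁻¹' A₁)).toReal / (Q (φ^[n] ⁻¹' (C k))).toReal =
      (P (φ^[n + m] ⁻¹' (C j) ∩ (φ^[n] ⁻¹' (C k) ∩ C i))).toReal /
        (P (φ^[n] ⁻¹' (C k) ∩ C i)).toReal := by
    intro n
    rw [hQdef, Measure.restrict_apply (hA₁.preimage (hφm n)),
      Measure.restrict_apply (hA₂.preimage (hφm n)), hpre n, Set.inter_assoc]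
  have hval : (μ A₁).toReal / (μ Set.univ).toReal * (Q Set.univ).toReal /
      ((μ (C k)).toReal / (μ Set.univ).toReal * (Q Set.univ).toReal) =
      (μ A₁).toReal / (μ (C k)).toReal := by
    rw [hQuniv]
    field_simp
  rw [hval] at hlim
  refine hlim.congr fun n => ?_
  simpa [Pi.div_apply] using heqfun n
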